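/- Let f : ℝⁿ → ℝ be convex, differentiable at x₀, and suppose f* is quadratically convex at y₀ = ∇f(x₀) with modulus 1/k, meaning f*(y) ≥ f*(y₀) + ⟨x₀, y−y₀⟩ + (1/(2k))|y−y₀|² for all y. Then K(f,x₀) ≤ k. -/

import Mathlib

open Filter Metric Set
open scoped RealInnerProductSpace Topology

/-- Slodkowski's generalized largest eigenvalue `K(u,x₀)`. -/
noncomputable def Kfn {n : ℕ} (u : EuclideanSpace ℝ (Fin n) → ℝ)
    (x₀ : EuclideanSpace ℝ (Fin n)) : EReal :=
  Filter.limsup (fun ε : ℝ =>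
    sSup ((fun h : EuclideanSpace ℝ (Fin n) =>
      ((2 / ε ^ 2 * (u (x₀ + ε • h) - u x₀ - ε * ⟪gradient u x₀, h⟫) : ℝ) : EReal)) ''
        {h | ‖h‖ = 1}))
    (𝓝[≠] (0 : ℝ))

/-- The Legendre–Fenchel conjugate, valued in `EReal`. -/
noncomputable def conjE {n : ℕ} (f : EuclideanSpace ℝ (Fin n) → ℝ)
    (y : EuclideanSpace ℝ (Fin n)) : EReal :=
  ⨆ x : EuclideanSpace ℝ (Fin n), ((⟪y, x⟫ - f x : ℝ) : EReal)

lemma exists_subgradient {n : ℕ} (f : EuclideanSpace ℝ (Fin n) → ℝ)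
    (hconv : ConvexOn ℝ Set.univ f) (x : EuclideanSpace ℝ (Fin n)) :
    ∃ y : EuclideanSpace ℝ (Fin n), ∀ z, f x + ⟪y, z - x⟫ ≤ f z := by
  have hfc : Continuous f := by
    rw [← continuousOn_univ]
    exact hconv.continuousOn isOpen_univ
  set S : Set ((EuclideanSpace ℝ (Fin n)) × ℝ) := {p | f p.1 < p.2} with hSdef
  have hSo : IsOpen S := isOpen_lt (hfc.comp continuous_fst) continuous_snd
  have hSc : Convex ℝ S := by
    rintro ⟨p1, p2⟩ hp ⟨q1, q2⟩ hq a b ha hb hab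
    simp only [S, mem_setOf_eq] at hp hq ⊢
    have h1 := hconv.2 (mem_univ p1) (mem_univ q1) ha hb hab
    simp only [smul_eq_mul] at h1
    have h2 : a * f p1 + b * f q1 < a * p2 + b * q2 := by
      rcases ha.eq_or_lt with rfl | ha'
      · have hb1 : b = 1 := by linarith
        nlinarith
      · nlinarith [mul_le_mul_of_nonneg_left hq.le hb]
    calc f (a • p1 + b • q1) ≤ a * f p1 + b * f q1 := h1
      _ < a * p2 + b * q2 := h2
  have hx : (x, f x) ∉ S := by simp [S]
  obtain ⟨l, hl⟩ := geometric_hahn_banach_point_open hSc hSo hx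
  set c : ℝ := l (0, 1) with hcdef
  have hsplit : ∀ (z : EuclideanSpace ℝ (Fin n)) (t : ℝ), l (z, t) = l (z, 0) + t * c := by
    intro z t
    have : (z, t) = (z, 0) + t • ((0 : EuclideanSpace ℝ (Fin n)), (1 : ℝ)) := by
      simp [Prod.ext_iff]
    rw [this, map_add, map_smul]
    simp [hcdef]
  have hc : 0 < c := by
    have h1 : ((x, f x + 1) : _ × ℝ) ∈ S := by simp [S]
    have := hl _ h1
    rw [hsplit x (f x + 1), hsplit x (f x)] at this
    linarith
  have key : ∀ z, l (x, 0) + c * f x ≤ l (z, 0) + c * f z := by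
    intro z
    by_contra hcon
    push_neg at hcon
    set s : ℝ := (l (x, 0) + c * f x - (l (z, 0) + c * f z)) / c with hsdef
    have hs : 0 < s := div_pos (by linarith) hc
    have hz : ((z, f z + s) : _ × ℝ) ∈ S := by simp [S, hs]
    have := hl _ hz
    rw [hsplit z (f z + s), hsplit x (f x)] at this
    have hsc : s * c = l (x, 0) + c * f x - (l (z, 0) + c * f z) := by
      rw [hsdef]; exact div_mul_cancel₀ _ hc.ne'
    nlinarith
  refine ⟨(InnerProductSpace.toDual ℝ _).symm
    ((-c⁻¹) • (l.comp (ContinuousLinearMap.inl ℝ _ ℝ))), fun z => ?_⟩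
  rw [InnerProductSpace.toDual_symm_apply]
  have hval : ((-c⁻¹) • (l.comp (ContinuousLinearMap.inl ℝ _ ℝ))) (z - x)
      = -c⁻¹ * (l (z, 0) - l (x, 0)) := by
    simp [map_sub]; ring
  rw [hval]
  have hk := key z
  have h2 : c⁻¹ * (l (x, 0) + c * f x) = c⁻¹ * l (x, 0) + f x := by
    rw [mul_add, ← mul_assoc, inv_mul_cancel₀ hc.ne', one_mul]
  have h3 : c⁻¹ * (l (z, 0) + c * f z) = c⁻¹ * l (z, 0) + f z := by
    rw [mul_add, ← mul_assoc, inv_mul_cancel₀ hc.ne', one_mul]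
  have h4 := mul_le_mul_of_nonneg_left hk (inv_nonneg.mpr hc.le)
  rw [h2, h3] at h4
  linarith

theorem stmt10 {n : ℕ} (f : EuclideanSpace ℝ (Fin n) → ℝ)
    (x₀ : EuclideanSpace ℝ (Fin n)) (hconv : ConvexOn ℝ Set.univ f)
    (hdiff : DifferentiableAt ℝ f x₀) (k : ℝ) (hk : 0 < k)
    (hquad : ∀ y : EuclideanSpace ℝ (Fin n),
      conjE f y ≥ ((⟪gradient f x₀, x₀⟫ - f x₀ + ⟪x₀, y - gradient f x₀⟫ +
        1 / (2 * k) * ‖y - gradient f x₀‖ ^ 2 : ℝ) : EReal)) :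
    Kfn f x₀ ≤ (k : EReal) := by
  set y₀ := gradient f x₀ with hy₀
  have hA : ∀ x, f x ≤ f x₀ + ⟪y₀, x - x₀⟫ + k / 2 * ‖x - x₀‖ ^ 2 := by
    intro x
    obtain ⟨v, hv⟩ := exists_subgradient f hconv x
    have hconj : conjE f v ≤ ((⟪v, x⟫ - f x : ℝ) : EReal) := by
      refine iSup_le fun z => ?_
      rw [EReal.coe_le_coe_iff]
      have h1 := hv z
      have h2 : ⟪v, z - x⟫ = ⟪v, z⟫ - ⟪v, x⟫ := inner_sub_right v z x
      linarith
    have hreal : ⟪y₀, x₀⟫ - f x₀ + ⟪x₀, v - y₀⟫ + 1 / (2 * k) * ‖v - y₀‖ ^ 2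
        ≤ ⟪v, x⟫ - f x := by
      have := le_trans (hquad v) hconj
      exact_mod_cast this
    have e1 : ⟪v, x⟫ = ⟪v - y₀, x - x₀⟫ + ⟪y₀, x - x₀⟫ + ⟪v, x₀⟫ := by
      simp [inner_sub_left, inner_sub_right]; ring
    have e2 : ⟪x₀, v - y₀⟫ = ⟪v, x₀⟫ - ⟪y₀, x₀⟫ := by
      rw [real_inner_comm, inner_sub_left]
    have key2 : 2 * k * ⟪v - y₀, x - x₀⟫ ≤ ‖v - y₀‖ ^ 2 + k ^ 2 * ‖x - x₀‖ ^ 2 := by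
      have hcs := real_inner_le_norm (v - y₀) (x - x₀)
      nlinarith [sq_nonneg (‖v - y₀‖ - k * ‖x - x₀‖), hk]
    have hA' : ⟪v - y₀, x - x₀⟫ ≤ 1 / (2 * k) * ‖v - y₀‖ ^ 2 + k / 2 * ‖x - x₀‖ ^ 2 := by
      rw [← sub_nonneg]
      have heq : 1 / (2 * k) * ‖v - y₀‖ ^ 2 + k / 2 * ‖x - x₀‖ ^ 2 - ⟪v - y₀, x - x₀⟫
          = (‖v - y₀‖ ^ 2 + k ^ 2 * ‖x - x₀‖ ^ 2 - 2 * k * ⟪v - y₀, x - x₀⟫) / (2 * k) := by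
        field_simp
      rw [heq]
      exact div_nonneg (by linarith) (by linarith)
    linarith [hreal, hA', e1, e2]
  have hB : ∀ ε : ℝ, ε ≠ 0 →
      sSup ((fun h : EuclideanSpace ℝ (Fin n) =>
        ((2 / ε ^ 2 * (f (x₀ + ε • h) - f x₀ - ε * ⟪gradient f x₀, h⟫) : ℝ) : EReal)) ''
          {h | ‖h‖ = 1}) ≤ (k : EReal) := by
    intro ε hε
    refine sSup_le ?_
    rintro e ⟨h, hh, rfl⟩
    simp only [mem_setOf_eq] at hh
    rw [EReal.coe_le_coe_iff]
    have hx := hA (x₀ + ε • h)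
    have hd : x₀ + ε • h - x₀ = ε • h := add_sub_cancel_left x₀ (ε • h)
    rw [hd] at hx
    have hi : ⟪y₀, ε • h⟫ = ε * ⟪y₀, h⟫ := real_inner_smul_right y₀ h ε
    have hn : ‖ε • h‖ ^ 2 = ε ^ 2 := by
      rw [norm_smul, hh]
      simp [Real.norm_eq_abs, sq_abs]
    rw [hi, hn] at hx
    have hε2 : (0 : ℝ) < ε ^ 2 := by positivity
    rw [div_mul_eq_mul_div, div_le_iff₀ hε2]
    rw [← hy₀]
    nlinarith
  rw [Kfn]
  refine Filter.limsup_le_of_le (by isBoundedDefault) ?_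
  filter_upwards [self_mem_nhdsWithin] with ε hε
  exact hB ε hε
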